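/- arXiv:1704.00105 — 2 statements merged into one kernel-verified Lean document; each statement's English description precedes it below -/
import Mathlib

section
/- A set A ⊆ ℤ is sufficiently sparse if and only if for all n ≥ 1, the lower asymptotic density of Σ_n(±A) ∩ ℤ⁺ is 0. -/
open scoped Classical

/-- `Σ_n(±A) = {x_1 + ... + x_k : k ≤ n, |x_i| ∈ A}`. -/
def SigmaSet (A : Set ℤ) (n : ℕ) : Set ℤ :=
  {x | ∃ k ≤ n, ∃ y : Fin k → ℤ, (∀ i, |y i| ∈ A) ∧ x = ∑ i, y i}

/-- `A` is sufficiently sparse if no `Σ_n(±A)` contains a nontrivial subgroup of `ℤ`. -/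
def SuffSparse (A : Set ℤ) : Prop :=
  ∀ n : ℕ, ∀ H : AddSubgroup ℤ, (H : Set ℤ) ⊆ SigmaSet A n → H = ⊥

lemma SigmaSet.zero_mem (A : Set ℤ) (n : ℕ) : (0:ℤ) ∈ SigmaSet A n :=
  ⟨0, Nat.zero_le n, ![], by intro i; exact i.elim0, by simp⟩

lemma SigmaSet.mono (A : Set ℤ) {n m : ℕ} (h : n ≤ m) : SigmaSet A n ⊆ SigmaSet A m := by
  rintro x ⟨k, hk, y, hy, rfl⟩
  exact ⟨k, hk.trans h, y, hy, rfl⟩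

lemma SigmaSet.neg_mem (A : Set ℤ) {n : ℕ} {x : ℤ} (h : x ∈ SigmaSet A n) :
    -x ∈ SigmaSet A n := by
  obtain ⟨k, hk, y, hy, rfl⟩ := h
  exact ⟨k, hk, fun i => -(y i), fun i => by simpa using hy i, by simp [Finset.sum_neg_distrib]⟩

lemma SigmaSet.add_mem (A : Set ℤ) {a b : ℕ} {x z : ℤ} (hx : x ∈ SigmaSet A a)
    (hz : z ∈ SigmaSet A b) : x + z ∈ SigmaSet A (a + b) := by
  obtain ⟨k, hk, y, hy, rfl⟩ := hx
  obtain ⟨l, hl, w, hw, rfl⟩ := hz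
  refine ⟨k + l, Nat.add_le_add hk hl, Fin.append y w, ?_, ?_⟩
  · intro i
    refine Fin.addCases (fun j => ?_) (fun j => ?_) i
    · rw [Fin.append_left]; exact hy j
    · rw [Fin.append_right]; exact hw j
  · rw [Fin.sum_univ_add]
    simp [Fin.append_left, Fin.append_right]

lemma SigmaSet.exists_of_mem_closure {A : Set ℤ} {n : ℕ} {S : Set ℤ} (hS : S ⊆ SigmaSet A n)
    {x : ℤ} (hx : x ∈ AddSubgroup.closure S) : ∃ M, x ∈ SigmaSet A M := by
  induction hx using AddSubgroup.closure_induction with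
  | mem y hy => exact ⟨n, hS hy⟩
  | zero => exact ⟨0, SigmaSet.zero_mem A 0⟩
  | add y z hy hz ihy ihz =>
    obtain ⟨M1, h1⟩ := ihy
    obtain ⟨M2, h2⟩ := ihz
    exact ⟨M1 + M2, SigmaSet.add_mem A h1 h2⟩
  | neg y hy ihy =>
    obtain ⟨M, h⟩ := ihy
    exact ⟨M, SigmaSet.neg_mem A h⟩

lemma ncard_inter_Icc_le (S : Set ℤ) (m : ℕ) : (S ∩ Set.Icc 1 (m:ℤ)).ncard ≤ m := by
  calc (S ∩ Set.Icc 1 (m:ℤ)).ncard ≤ (Set.Icc 1 (m:ℤ)).ncard :=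
        Set.ncard_le_ncard Set.inter_subset_right (Set.finite_Icc _ _)
    _ = m := by
        rw [← Finset.coe_Icc, Set.ncard_coe_finset, Int.card_Icc]
        simp


/-- count of elements of `C` in `[1,m]`. -/
noncomputable def cntN (C : Set ℕ) (m : ℕ) : ℕ :=
  ((Finset.Icc 1 m).filter (· ∈ C)).card

/-- count of elements of `[1,m]` not in `D`. -/
noncomputable def badN (D : Set ℕ) (m : ℕ) : ℕ :=
  ((Finset.Icc 1 m).filter (· ∉ D)).card

/-- sumset in ℕ -/
def saddN (C D : Set ℕ) : Set ℕ := {x | ∃ c ∈ C, ∃ t ∈ D, x = c + t}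

lemma cnt_add_bad (C : Set ℕ) (m : ℕ) : cntN C m + badN C m = m := by
  rw [cntN, badN, Finset.card_filter_add_card_filter_not]
  simp

lemma badN_le (D : Set ℕ) (m : ℕ) : badN D m ≤ m := by
  calc badN D m ≤ (Finset.Icc 1 m).card := Finset.card_filter_le _ _
  _ = m := by simp

lemma Icc_split {p m : ℕ} (h : p ≤ m) :
    Finset.Icc 1 m = Finset.Icc 1 p ∪ Finset.Icc (p+1) m := by
  ext x; simp only [Finset.mem_Icc, Finset.mem_union]; omega

lemma badN_split (D : Set ℕ) {p m : ℕ} (h : p ≤ m) :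
    badN D m = badN D p + ((Finset.Icc (p+1) m).filter (· ∉ D)).card := by
  rw [badN, badN, Icc_split h, Finset.filter_union, Finset.card_union_of_disjoint]
  refine Finset.disjoint_filter_filter (Finset.disjoint_left.2 ?_)
  intro a ha hb
  simp only [Finset.mem_Icc] at ha hb
  omega

lemma badN_mono (D : Set ℕ) {p m : ℕ} (h : p ≤ m) : badN D p ≤ badN D m := by
  rw [badN_split D h]; omega


lemma shnirelman_key (C D : Set ℕ) (K : ℕ) (hC0 : 0 ∈ C) (hD0 : 0 ∈ D)
    (hK : ∀ g, 1 ≤ g → g ≤ K * cntN C g) :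
    ∀ m, K * badN (saddN C D) m ≤ (K - 1) * badN D m := by
  have hK1 : 1 ≤ K := by
    have := hK 1 le_rfl
    by_contra h
    interval_cases K <;> omega
  intro m
  induction m using Nat.strong_induction_on with
  | _ m ih =>
  rcases Nat.eq_zero_or_pos m with rfl | hm
  · simp [badN]
  by_cases hmE : m ∈ saddN C D
  · -- bad (m) = bad (m-1)
    have h1 : badN (saddN C D) m = badN (saddN C D) (m - 1) := by
      rw [badN_split (saddN C D) (Nat.sub_le m 1)]
      have : (Finset.Icc (m - 1 + 1) m).filter (· ∉ saddN C D) = ∅ := by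
        rw [Finset.filter_eq_empty_iff]
        intro x hx
        simp only [Finset.mem_Icc] at hx
        have : x = m := by omega
        simpa [this] using hmE
      rw [this]; simp
    calc K * badN (saddN C D) m = K * badN (saddN C D) (m - 1) := by rw [h1]
      _ ≤ (K - 1) * badN D (m - 1) := ih _ (by omega)
      _ ≤ (K - 1) * badN D m := Nat.mul_le_mul_left _ (badN_mono D (by omega))
  · -- m not in C + D
    have hmD : m ∉ D := fun h => hmE ⟨0, hC0, m, h, by simp⟩
    -- the largest element of D in [0, m]
    set P : Finset ℕ := insert 0 ((Finset.Icc 1 m).filter (· ∈ D)) with hP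
    have hPne : P.Nonempty := ⟨0, Finset.mem_insert_self _ _⟩
    set p := P.max' hPne with hp
    have hpP : p ∈ P := P.max'_mem hPne
    have hpD : p ∈ D := by
      rcases Finset.mem_insert.1 hpP with h | h
      · rwa [h]
      · exact (Finset.mem_filter.1 h).2
    have hple : p ≤ m := by
      rcases Finset.mem_insert.1 hpP with h | h
      · omega
      · exact (Finset.mem_Icc.1 (Finset.mem_filter.1 h).1).2
    have hplt : p < m := lt_of_le_of_ne hple (fun h => hmD (h ▸ hpD))
    have hmax : ∀ x, p < x → x ≤ m → x ∉ D := by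
      intro x h1 h2 hxD
      have : x ∈ P := Finset.mem_insert_of_mem (Finset.mem_filter.2 ⟨Finset.mem_Icc.2 ⟨by omega, h2⟩, hxD⟩)
      exact absurd (P.le_max' x this) (by omega)
    set g := m - p with hg
    have hg1 : 1 ≤ g := by omega
    -- bad D m = bad D p + g
    have hDsplit : badN D m = badN D p + g := by
      rw [badN_split D hple]
      congr 1
      have : (Finset.Icc (p+1) m).filter (· ∉ D) = Finset.Icc (p+1) m := by
        rw [Finset.filter_eq_self]
        intro x hx
        simp only [Finset.mem_Icc] at hx
        exact hmax x (by omega) hx.2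
      rw [this, Nat.card_Icc]; omega
    -- bad E m ≤ bad E p + (g - cnt C g)
    have hEle : badN (saddN C D) m ≤ badN (saddN C D) p + badN C g := by
      rw [badN_split (saddN C D) hple]
      gcongr
      -- injection x ↦ x - p
      apply Finset.card_le_card_of_injOn (fun x => x - p)
      · intro x hx
        simp only [Finset.mem_coe, Finset.mem_filter, Finset.mem_Icc] at hx ⊢
        refine ⟨⟨by omega, by omega⟩, ?_⟩
        intro hxC
        exact hx.2 ⟨x - p, hxC, p, hpD, by omega⟩
      · intro a ha b hb hab
        simp only [Finset.mem_coe, Finset.mem_filter, Finset.mem_Icc] at ha hb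
        dsimp only at hab
        omega
    have hcnt : g ≤ K * cntN C g := hK g hg1
    have hcb : cntN C g + badN C g = g := cnt_add_bad C g
    have key1 : K * badN C g ≤ (K - 1) * g := by
      have e1 : K * cntN C g + K * badN C g = K * g := by rw [← Nat.mul_add, hcb]
      have e2 : (K - 1) * g + g = K * g := by
        have : (K - 1) + 1 = K := by omega
        calc (K-1) * g + g = ((K-1) + 1) * g := by ring
        _ = K * g := by rw [this]
      omega
    have ihp := ih p (by omega)
    calc K * badN (saddN C D) m ≤ K * (badN (saddN C D) p + badN C g) :=
          Nat.mul_le_mul_left _ hEle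
      _ = K * badN (saddN C D) p + K * badN C g := by ring
      _ ≤ (K - 1) * badN D p + (K - 1) * g := Nat.add_le_add ihp key1
      _ = (K - 1) * (badN D p + g) := by ring
      _ = (K - 1) * badN D m := by rw [hDsplit]


/-- iterated sumset -/
def nfoldN (C : Set ℕ) : ℕ → Set ℕ
  | 0 => {0}
  | (h+1) => saddN C (nfoldN C h)

lemma nfoldN_zero_mem (C : Set ℕ) (hC0 : 0 ∈ C) : ∀ h, 0 ∈ nfoldN C h := by
  intro h
  induction h with
  | zero => simp [nfoldN]
  | succ h ih => exact ⟨0, hC0, 0, ih, rfl⟩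

lemma shnirelman_iter (C : Set ℕ) (K : ℕ) (hC0 : 0 ∈ C)
    (hK : ∀ g, 1 ≤ g → g ≤ K * cntN C g) :
    ∀ h m, K ^ h * badN (nfoldN C h) m ≤ (K - 1) ^ h * m := by
  intro h
  induction h with
  | zero => intro m; simpa using badN_le _ m
  | succ h ih =>
    intro m
    calc K ^ (h+1) * badN (nfoldN C (h+1)) m
        = K ^ h * (K * badN (saddN C (nfoldN C h)) m) := by rw [nfoldN]; ring
      _ ≤ K ^ h * ((K - 1) * badN (nfoldN C h) m) :=
          Nat.mul_le_mul_left _ (shnirelman_key C _ K hC0 (nfoldN_zero_mem C hC0 h) hK m)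
      _ = (K - 1) * (K ^ h * badN (nfoldN C h) m) := by ring
      _ ≤ (K - 1) * ((K - 1) ^ h * m) := Nat.mul_le_mul_left _ (ih m)
      _ = (K - 1) ^ (h+1) * m := by ring

lemma exists_pow_boost (K : ℕ) (hK : 1 ≤ K) : ∃ h : ℕ, 2 * (K - 1) ^ h < K ^ h := by
  rcases Nat.eq_or_lt_of_le hK with rfl | hK2
  · exact ⟨1, by norm_num⟩
  have hr : ((K:ℝ) - 1) / K < 1 := by
    rw [div_lt_one (by positivity)]; have : (1:ℝ) < K := by exact_mod_cast hK2
    linarith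
  have hr0 : (0:ℝ) ≤ ((K:ℝ) - 1) / K := by
    apply div_nonneg _ (by positivity)
    have : (1:ℝ) ≤ K := by exact_mod_cast hK
    linarith
  have := tendsto_pow_atTop_nhds_zero_of_lt_one hr0 hr
  have h2 := this.eventually (gt_mem_nhds (by norm_num : (0:ℝ) < 1/2))
  obtain ⟨h, hh⟩ := h2.exists
  refine ⟨h, ?_⟩
  have hKpos : (0:ℝ) < (K:ℝ)^h := by positivity
  have hcast : ((K - 1 : ℕ) : ℝ) = (K:ℝ) - 1 := by
    have : (1:ℕ) ≤ K := hK
    push_cast [this]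
    ring
  have : 2 * ((K-1:ℕ):ℝ)^h < (K:ℝ)^h := by
    rw [hcast]
    have := (div_pow ((K:ℝ)-1) (K:ℝ) h) ▸ hh
    rw [div_lt_iff₀ hKpos] at this
    linarith
  exact_mod_cast this

lemma pigeonhole_half (E : Set ℕ) (hE0 : 0 ∈ E) (h2 : ∀ x, 1 ≤ x → 2 * badN E x < x) :
    ∀ x : ℕ, ∃ a ∈ E, ∃ b ∈ E, a + b = x := by
  intro x
  rcases Nat.eq_zero_or_pos x with rfl | hx
  · exact ⟨0, hE0, 0, hE0, rfl⟩
  set X : Finset ℕ := (Finset.Icc 0 x).filter (· ∈ E) with hX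
  set Y : Finset ℕ := X.image (fun a => x - a) with hY
  have hXcard : X.card = cntN E x + 1 := by
    have : X = insert 0 ((Finset.Icc 1 x).filter (· ∈ E)) := by
      ext a
      simp only [hX, Finset.mem_filter, Finset.mem_Icc, Finset.mem_insert]
      constructor
      · rintro ⟨⟨_, h1⟩, h2⟩
        rcases Nat.eq_zero_or_pos a with rfl | ha
        · left; rfl
        · right; exact ⟨⟨ha, h1⟩, h2⟩
      · rintro (rfl | ⟨⟨h1, h2⟩, h3⟩)
        · exact ⟨⟨Nat.zero_le _, Nat.zero_le _⟩, hE0⟩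
        · exact ⟨⟨Nat.zero_le _, h2⟩, h3⟩
    rw [this, Finset.card_insert_of_notMem (by simp), cntN]
  have hYcard : Y.card = X.card := by
    rw [hY]
    apply Finset.card_image_of_injOn
    intro a ha b hb hab
    simp only [hX, Finset.mem_coe, Finset.mem_filter, Finset.mem_Icc] at ha hb
    dsimp only at hab
    omega
  by_cases hdisj : Disjoint X Y
  · exfalso
    have hsub : X ∪ Y ⊆ Finset.Icc 0 x := by
      intro a ha
      rcases Finset.mem_union.1 ha with h | h
      · exact (Finset.mem_filter.1 h).1
      · obtain ⟨b, hb, rfl⟩ := Finset.mem_image.1 h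
        simp only [Finset.mem_Icc]
        omega
    have hcard := Finset.card_le_card hsub
    rw [Finset.card_union_of_disjoint hdisj, hXcard, hYcard, hXcard, Nat.card_Icc] at hcard
    have hcb := cnt_add_bad E x
    have := h2 x hx
    omega
  · rw [Finset.not_disjoint_iff] at hdisj
    obtain ⟨z, hzX, hzY⟩ := hdisj
    obtain ⟨a, haX, rfl⟩ := Finset.mem_image.1 hzY
    simp only [hX, Finset.mem_filter, Finset.mem_Icc] at hzX haX
    exact ⟨a, haX.2, x - a, hzX.2, by omega⟩

lemma liminf_pos_of_subgroup {A : Set ℤ} {n : ℕ} {H : AddSubgroup ℤ}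
    (hsub : (H : Set ℤ) ⊆ SigmaSet A n) (hne : H ≠ ⊥) :
    Filter.liminf (fun m : ℕ =>
      (Set.ncard (SigmaSet A n ∩ Set.Icc 1 (m : ℤ)) : ℝ) / m) Filter.atTop ≠ 0 := by
  obtain ⟨g, hgH, hg0⟩ : ∃ g ∈ H, g ≠ 0 := by
    by_contra h'
    push_neg at h'
    exact hne ((AddSubgroup.eq_bot_iff_forall H).2 h')
  set d := g.natAbs with hd0
  have hd : 1 ≤ d := Int.natAbs_pos.2 hg0
  set f : ℕ → ℝ := fun m => (Set.ncard (SigmaSet A n ∩ Set.Icc 1 (m : ℤ)) : ℝ) / m with hf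
  -- key counting bound
  have hkey : ∀ m : ℕ, m / d ≤ (SigmaSet A n ∩ Set.Icc 1 (m:ℤ)).ncard := by
    intro m
    have hmaps : ∀ j ∈ (↑(Finset.Icc 1 (m/d)) : Set ℕ),
        ((j * d : ℕ) : ℤ) ∈ SigmaSet A n ∩ Set.Icc 1 (m:ℤ) := by
      intro j hj
      simp only [Finset.coe_Icc, Set.mem_Icc] at hj
      have hjd : ((j * d : ℕ) : ℤ) ∈ H := by
        have habs : ((j * d : ℕ) : ℤ) = (j:ℤ) * |g| := by
          rw [Int.abs_eq_natAbs, ← hd0]; push_cast; ring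
        rcases abs_choice g with h | h
        · rw [habs, h]
          exact AddSubgroup.zsmul_mem H hgH (j:ℤ)
        · rw [habs, h]
          have := AddSubgroup.zsmul_mem H hgH (-(j:ℤ))
          simpa [neg_smul] using this
      refine ⟨hsub hjd, ?_⟩
      constructor
      · have : 1 ≤ j * d := Nat.one_le_iff_ne_zero.2 (Nat.mul_ne_zero (by omega) (by omega))
        exact_mod_cast this
      · have : j * d ≤ m := le_trans (Nat.mul_le_mul_right d hj.2) (Nat.div_mul_le_self m d)
        exact_mod_cast this
    have hinj : Set.InjOn (fun j : ℕ => ((j * d : ℕ) : ℤ)) (↑(Finset.Icc 1 (m/d)) : Set ℕ) := by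
      intro a _ b _ hab
      dsimp only at hab
      have : a * d = b * d := by exact_mod_cast hab
      exact Nat.eq_of_mul_eq_mul_right (by omega) this
    have := Set.ncard_le_ncard_of_injOn _ hmaps hinj
      ((Set.finite_Icc _ _).inter_of_right _)
    rwa [Set.ncard_coe_finset, Nat.card_Icc, Nat.add_sub_cancel] at this
  -- liminf lower bound
  have hco : Filter.IsCoboundedUnder (· ≥ ·) Filter.atTop f := by
    refine Filter.IsBoundedUnder.isCoboundedUnder_ge
      ⟨1, Filter.eventually_map.2 (Filter.Eventually.of_forall fun m => ?_)⟩
    rcases Nat.eq_zero_or_pos m with rfl | hm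
    · simp [hf]
    · rw [hf]
      have h1 := ncard_inter_Icc_le (SigmaSet A n) m
      rw [div_le_one (by positivity)]
      exact_mod_cast h1
  have hev : ∀ᶠ m in Filter.atTop, (1:ℝ)/(2*d) ≤ f m := by
    rw [Filter.eventually_atTop]
    refine ⟨2*d, fun m hm => ?_⟩
    have hm1 : 1 ≤ m := by omega
    rw [hf]
    have hdm := Nat.div_add_mod m d
    have hmod := Nat.mod_lt m (show 0 < d by omega)
    have hnat : m ≤ 2 * d * (m / d) := by
      -- m = d*(m/d) + m%d, m%d < d, m ≥ 2d ⇒ m/d ≥ 1... 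
      nlinarith [hdm, hmod, hm]
    have hkm := hkey m
    rw [div_le_div_iff₀ (by positivity) (by exact_mod_cast hm1)]
    have h2 : (m:ℝ) ≤ 2 * d * (m/d : ℕ) := by exact_mod_cast hnat
    have h3 : ((m/d : ℕ) : ℝ) ≤ (SigmaSet A n ∩ Set.Icc 1 (m:ℤ)).ncard := by exact_mod_cast hkm
    calc (1:ℝ) * m = m := by ring
      _ ≤ 2 * d * (m/d : ℕ) := h2
      _ ≤ (Set.ncard (SigmaSet A n ∩ Set.Icc 1 (m:ℤ)) : ℝ) * (2 * d) := by nlinarith [h3, show (0:ℝ) < 2*d by positivity]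
  have hge : (1:ℝ)/(2*d) ≤ Filter.liminf f Filter.atTop := Filter.le_liminf_of_le hco hev
  intro h0
  rw [h0] at hge
  have : (0:ℝ) < 1/(2*d) := by positivity
  linarith

lemma nfold_transfer {A : Set ℤ} {M : ℕ} {d : ℕ}
    (C : Set ℕ) (hC : ∀ c ∈ C, ((d:ℤ) * c) ∈ SigmaSet A M) :
    ∀ h x, x ∈ nfoldN C h → ((d:ℤ) * x) ∈ SigmaSet A (M * h) := by
  intro h
  induction h with
  | zero =>
    intro x hx
    have : x = 0 := hx
    simp only [this, Nat.cast_zero, mul_zero]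
    exact SigmaSet.zero_mem A _
  | succ h ih =>
    rintro x ⟨c, hc, t, ht, rfl⟩
    have h1 := hC c hc
    have h2 := ih t ht
    have h3 := SigmaSet.add_mem A h1 h2
    have he : (d:ℤ) * c + (d:ℤ) * t = (d:ℤ) * ((c + t : ℕ) : ℤ) := by push_cast; ring
    rw [he] at h3
    have : M + M * h = M * (h + 1) := by ring
    rwa [this] at h3

lemma main_forward {A : Set ℤ} (hs : SuffSparse A) (n : ℕ) (hn : 1 ≤ n) :
    Filter.liminf (fun m : ℕ =>
      (Set.ncard (SigmaSet A n ∩ Set.Icc 1 (m : ℤ)) : ℝ) / m) Filter.atTop = 0 := by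
  by_contra hne
  set S := SigmaSet A n with hSdef
  set f : ℕ → ℝ := fun m => ((S ∩ Set.Icc 1 (m:ℤ)).ncard : ℝ) / m with hf
  have hub : ∀ m : ℕ, f m ≤ 1 := by
    intro m
    rcases Nat.eq_zero_or_pos m with rfl | hm
    · simp [hf]
    · rw [hf]
      have h1 := ncard_inter_Icc_le S m
      rw [div_le_one (by positivity)]
      exact_mod_cast h1
  have hlb : ∀ m : ℕ, 0 ≤ f m := fun m => by rw [hf]; positivity
  have hbddle : Filter.IsBoundedUnder (· ≤ ·) Filter.atTop f :=
    ⟨1, Filter.eventually_map.2 (Filter.Eventually.of_forall hub)⟩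
  have hbddge : Filter.IsBoundedUnder (· ≥ ·) Filter.atTop f :=
    ⟨0, Filter.eventually_map.2 (Filter.Eventually.of_forall hlb)⟩
  have hco : Filter.IsCoboundedUnder (· ≥ ·) Filter.atTop f :=
    hbddle.isCoboundedUnder_ge
  set L := Filter.liminf f Filter.atTop with hL
  have h0 : 0 ≤ L := Filter.le_liminf_of_le hco (Filter.Eventually.of_forall hlb)
  have hpos : 0 < L := lt_of_le_of_ne h0 (Ne.symm hne)
  set ε := L/2 with hε
  have hεpos : 0 < ε := by rw [hε]; positivity
  have hev : ∀ᶠ m in Filter.atTop, ε < f m :=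
    Filter.eventually_lt_of_lt_liminf (by rw [hε]; linarith) hbddge
  obtain ⟨N₀, hN₀⟩ := Filter.eventually_atTop.1 (hev.and (Filter.eventually_ge_atTop 1))
  set N₁ := max N₀ 1 with hN₁
  have hN₁1 : 1 ≤ N₁ := le_max_right _ _
  have hcard : ∀ m, N₁ ≤ m → ε * m ≤ ((S ∩ Set.Icc 1 (m:ℤ)).ncard : ℝ) := by
    intro m hm
    obtain ⟨h1, h2⟩ := hN₀ m (le_trans (le_max_left _ _) hm)
    rw [hf] at h1
    have hm0 : (0:ℝ) < m := by exact_mod_cast lt_of_lt_of_le Nat.one_pos h2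
    rw [lt_div_iff₀ hm0] at h1
    linarith
  -- a positive element of S
  obtain ⟨s, hsS, hs1⟩ : ∃ s, s ∈ S ∧ 1 ≤ s := by
    set m₁ := max N₁ ⌈1/ε⌉₊ with hm₁
    have h1 : (1:ℝ) ≤ ε * m₁ := by
      have : (1/ε : ℝ) ≤ m₁ := le_trans (Nat.le_ceil _) (by exact_mod_cast le_max_right N₁ _)
      calc (1:ℝ) = ε * (1/ε) := by field_simp
        _ ≤ ε * m₁ := by
            apply mul_le_mul_of_nonneg_left this (le_of_lt hεpos)
    have h2 := hcard m₁ (le_max_left _ _)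
    have h3 : (1:ℝ) ≤ ((S ∩ Set.Icc 1 (m₁:ℤ)).ncard : ℝ) := le_trans h1 h2
    have h4 : 1 ≤ (S ∩ Set.Icc 1 (m₁:ℤ)).ncard := by exact_mod_cast h3
    obtain ⟨s, hs⟩ := Set.nonempty_of_ncard_ne_zero
      (show (S ∩ Set.Icc 1 (m₁:ℤ)).ncard ≠ 0 by omega)
    exact ⟨s, hs.1, hs.2.1⟩
  -- the subgroup generated by S
  obtain ⟨g, hg⟩ := Int.subgroup_cyclic (AddSubgroup.closure S)
  have hmemS : ∀ y ∈ S, ∃ j : ℤ, y = j * g := by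
    intro y hy
    have : y ∈ AddSubgroup.closure ({g} : Set ℤ) := hg ▸ AddSubgroup.subset_closure hy
    obtain ⟨j, hj⟩ := AddSubgroup.mem_closure_singleton.1 this
    exact ⟨j, by rw [← hj]; simp [zsmul_eq_mul]⟩
  have hg0 : g ≠ 0 := by
    rintro rfl
    obtain ⟨j, hj⟩ := hmemS s hsS
    rw [hj] at hs1; simp at hs1
  set d := g.natAbs with hddef
  have hd : 1 ≤ d := Int.natAbs_pos.2 hg0
  -- d ∈ some SigmaSet
  have hgS : g ∈ AddSubgroup.closure S := by
    rw [hg]; exact AddSubgroup.subset_closure rfl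
  obtain ⟨M, hgM⟩ := SigmaSet.exists_of_mem_closure (le_refl S) hgS
  have hdM : ((d:ℕ):ℤ) ∈ SigmaSet A M := by
    rcases Int.natAbs_eq g with h | h
    · rw [← h]; exact hgM
    · have := SigmaSet.neg_mem A hgM
      rw [← neg_eq_iff_eq_neg.2 h]
      exact this
  set M' := max M n with hM'
  set C : Set ℕ := {c : ℕ | ((d:ℤ) * c) ∈ SigmaSet A M'} with hC
  have hC0 : 0 ∈ C := by
    show (d:ℤ) * (0:ℕ) ∈ SigmaSet A M'
    simp only [Nat.cast_zero, mul_zero]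
    exact SigmaSet.zero_mem A M'
  have hC1 : 1 ∈ C := by
    show (d:ℤ) * (1:ℕ) ∈ SigmaSet A M'
    simpa using SigmaSet.mono A (le_max_left M n) hdM
  -- counting: S ∩ [1, qd] injects into C ∩ [1, q]
  have hcnt : ∀ q : ℕ, (S ∩ Set.Icc 1 ((q*d : ℕ):ℤ)).ncard ≤ cntN C q := by
    intro q
    have key : ∀ y ∈ S ∩ Set.Icc 1 ((q*d:ℕ):ℤ), ∃ c : ℕ, y = (d:ℤ) * c := by
      intro y hy
      obtain ⟨j, hj⟩ := hmemS y hy.1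
      have hy1 : 1 ≤ y := hy.2.1
      refine ⟨j.natAbs, ?_⟩
      have habs : y.natAbs = j.natAbs * d := by rw [hj, Int.natAbs_mul, hddef]
      have : (y.natAbs : ℤ) = y := Int.natAbs_of_nonneg (by omega)
      rw [← this, habs]
      push_cast; ring
    set φ : ℤ → ℕ := fun y => y.natAbs / d with hφ
    have hdφ : ∀ y ∈ S ∩ Set.Icc 1 ((q*d:ℕ):ℤ), ((d:ℤ) * (φ y) = y) := by
      intro y hy
      obtain ⟨c, hc⟩ := key y hy
      have : y.natAbs = d * c := by
        rw [hc, Int.natAbs_mul]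
        simp [Int.natAbs_natCast]
      rw [hφ]
      simp only []
      rw [this, Nat.mul_div_cancel_left c (by omega)]
      exact hc.symm
    have hmaps : ∀ y ∈ S ∩ Set.Icc 1 ((q*d:ℕ):ℤ),
        φ y ∈ (↑((Finset.Icc 1 q).filter (· ∈ C)) : Set ℕ) := by
      intro y hy
      have hdy := hdφ y hy
      have hy1 : 1 ≤ y := hy.2.1
      have hyq : y ≤ (q*d:ℕ) := hy.2.2
      simp only [Finset.coe_filter, Finset.mem_Icc, Set.mem_setOf_eq]
      refine ⟨⟨?_, ?_⟩, ?_⟩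
      · by_contra h
        have : φ y = 0 := by omega
        rw [this] at hdy
        simp at hdy
        omega
      · by_contra h
        have h2 : q + 1 ≤ φ y := by omega
        have : ((q*d:ℕ):ℤ) < (d:ℤ) * (φ y) := by
          have : (q:ℤ) * d < d * (φ y) := by
            have hq1 : ((q:ℤ)+1) * d ≤ d * φ y := by
              have : ((q+1 : ℕ):ℤ) ≤ (φ y : ℤ) := by exact_mod_cast h2
              nlinarith [show (1:ℤ) ≤ (d:ℤ) by exact_mod_cast hd]
            nlinarith [show (1:ℤ) ≤ (d:ℤ) by exact_mod_cast hd]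
          push_cast
          linarith
        omega
      · show (d:ℤ) * (φ y) ∈ SigmaSet A M'
        rw [hdy]
        exact SigmaSet.mono A (le_max_right M n) hy.1
    have hinj : Set.InjOn φ (S ∩ Set.Icc 1 ((q*d:ℕ):ℤ)) := by
      intro y1 hy1 y2 hy2 hφeq
      have e1 := hdφ y1 hy1
      have e2 := hdφ y2 hy2
      rw [← e1, ← e2, hφeq]
    have hle := Set.ncard_le_ncard_of_injOn φ hmaps hinj (Finset.finite_toSet _)
    rwa [Set.ncard_coe_finset] at hle
  -- density of C
  set K := max N₁ ⌈1/ε⌉₊ with hK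
  have hK1 : 1 ≤ K := le_trans hN₁1 (le_max_left _ _)
  have hKd : ∀ q, 1 ≤ q → q ≤ K * cntN C q := by
    intro q hq
    rcases le_or_gt N₁ q with hN | hN
    · -- large q
      have hqd : N₁ ≤ q * d := le_trans hN (Nat.le_mul_of_pos_right q (by omega))
      have h1 := hcard (q*d) hqd
      have h2 := hcnt q
      have h3 : ε * q ≤ (cntN C q : ℝ) := by
        calc ε * q ≤ ε * (q * d) := by
              have : (q:ℝ) ≤ (q:ℝ) * d := by
                nlinarith [show (1:ℝ) ≤ (d:ℝ) by exact_mod_cast hd, show (0:ℝ) ≤ (q:ℝ) by positivity]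
              nlinarith
          _ = ε * ((q*d : ℕ):ℝ) := by push_cast; ring
          _ ≤ ((S ∩ Set.Icc 1 ((q*d:ℕ):ℤ)).ncard : ℝ) := h1
          _ ≤ (cntN C q : ℝ) := by exact_mod_cast h2
      have h4 : (1/ε : ℝ) ≤ K := le_trans (Nat.le_ceil _) (by exact_mod_cast le_max_right N₁ _)
      have h5 : (q : ℝ) ≤ (K : ℝ) * cntN C q := by
        calc (q:ℝ) = (1/ε) * (ε * q) := by field_simp
          _ ≤ (K:ℝ) * (cntN C q) := by
              apply mul_le_mul h4 h3 (by positivity) (by positivity)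
      exact_mod_cast h5
    · -- small q
      have hcpos : 1 ≤ cntN C q := by
        rw [cntN]
        refine Finset.card_pos.2 ⟨1, Finset.mem_filter.2 ⟨Finset.mem_Icc.2 ⟨le_refl _, hq⟩, hC1⟩⟩
      calc q ≤ N₁ := by omega
        _ ≤ K := le_max_left _ _
        _ ≤ K * cntN C q := Nat.le_mul_of_pos_right K (by omega)
  -- pigeonhole
  obtain ⟨h, hh⟩ := exists_pow_boost K hK1
  have hbad : ∀ x, 1 ≤ x → 2 * badN (nfoldN C h) x < x := by
    intro x hx
    have h1 := shnirelman_iter C K hC0 hKd h x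
    have h2 : 2 * ((K-1)^h * x) < K ^ h * x := by
      have hlt := (Nat.mul_lt_mul_right (show 0 < x by omega)).mpr hh
      calc 2 * ((K-1)^h * x) = (2 * (K-1)^h) * x := by ring
        _ < K^h * x := hlt
    have h3 : 2 * (K^h * badN (nfoldN C h) x) < K^h * x := by
      calc 2 * (K^h * badN (nfoldN C h) x) ≤ 2 * ((K-1)^h * x) := by omega
        _ < K^h * x := h2
    have hKh : 0 < K ^ h := Nat.pow_pos (by omega)
    have : K^h * (2 * badN (nfoldN C h) x) < K^h * x := by
      calc K^h * (2 * badN (nfoldN C h) x) = 2 * (K^h * badN (nfoldN C h) x) := by ring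
        _ < K^h * x := h3
    exact Nat.lt_of_mul_lt_mul_left this
  have hpig := pigeonhole_half (nfoldN C h) (nfoldN_zero_mem C hC0 h) hbad
  -- the subgroup
  set N := M' * h + M' * h with hN
  have keyx : ∀ x : ℕ, ((d:ℤ) * x) ∈ SigmaSet A N := by
    intro x
    obtain ⟨a, ha, b, hb, hab⟩ := hpig x
    have h1 := nfold_transfer C (fun c hc => hc) h a ha
    have h2 := nfold_transfer C (fun c hc => hc) h b hb
    have h3 := SigmaSet.add_mem A h1 h2
    have he : (d:ℤ) * a + (d:ℤ) * b = (d:ℤ) * (x:ℕ) := by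
      rw [← hab]; push_cast; ring
    rwa [he] at h3
  have hzsub : (AddSubgroup.zmultiples ((d:ℕ):ℤ) : Set ℤ) ⊆ SigmaSet A N := by
    intro z hz
    obtain ⟨k, hk⟩ := AddSubgroup.mem_zmultiples_iff.1 hz
    rw [zsmul_eq_mul] at hk
    push_cast at hk
    rcases le_or_gt 0 k with hk0 | hk0
    · have : z = (d:ℤ) * (k.toNat : ℕ) := by
        rw [← hk, Int.toNat_of_nonneg hk0]; ring
      rw [this]; exact keyx _
    · have h1 : -z = (d:ℤ) * ((-k).toNat : ℕ) := by
        rw [← hk, Int.toNat_of_nonneg (by omega)]; ring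
      have h2 := keyx ((-k).toNat)
      rw [← h1] at h2
      have := SigmaSet.neg_mem A h2
      simpa using this
  have hbot := hs N (AddSubgroup.zmultiples ((d:ℕ):ℤ)) hzsub
  have hdmem : ((d:ℕ):ℤ) ∈ AddSubgroup.zmultiples ((d:ℕ):ℤ) := AddSubgroup.mem_zmultiples _
  rw [hbot, AddSubgroup.mem_bot] at hdmem
  have : d = 0 := by exact_mod_cast hdmem
  omega


/-- `A ⊆ ℤ` is sufficiently sparse iff for all `n ≥ 1` the lower asymptotic density of
`Σ_n(±A) ∩ ℤ⁺` is `0`. -/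
theorem stmt16 (A : Set ℤ) :
    SuffSparse A ↔ ∀ n : ℕ, 1 ≤ n →
      Filter.liminf (fun m : ℕ =>
        (Set.ncard (SigmaSet A n ∩ Set.Icc 1 (m : ℤ)) : ℝ) / m) Filter.atTop = 0 := by
  constructor
  · intro hs n hn
    exact main_forward hs n hn
  · intro h n H hsub
    by_contra hne
    have hsub' : (H : Set ℤ) ⊆ SigmaSet A (max n 1) :=
      fun x hx => SigmaSet.mono A (le_max_left n 1) (hsub hx)
    exact liminf_pos_of_subgroup hsub' hne (h (max n 1) (le_max_right n 1))
end

section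
/- If A ⊆ ℤ is sufficiently sparse and F ⊆ ℤ is finite, then A + F is sufficiently sparse. -/
open Pointwise

lemma sigma_list (A : Set ℤ) (n : ℕ) (x : ℤ) :
    x ∈ SigmaSet A n ↔ ∃ l : List ℤ, l.length ≤ n ∧ (∀ y ∈ l, |y| ∈ A) ∧ x = l.sum := by
  constructor
  · rintro ⟨k, hk, y, hy, rfl⟩
    refine ⟨List.ofFn y, by simpa using hk, ?_, by simp [List.sum_ofFn]⟩
    intro z hz
    rw [List.mem_ofFn] at hz
    obtain ⟨i, rfl⟩ := hz
    exact hy i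
  · rintro ⟨l, hl, hmem, rfl⟩
    refine ⟨l.length, hl, l.get, fun i => hmem _ (l.get_mem i), ?_⟩
    conv_lhs => rw [← List.ofFn_get l]
    rw [List.sum_ofFn]

lemma sigma_zero_mem (A : Set ℤ) (n : ℕ) : (0 : ℤ) ∈ SigmaSet A n := by
  rw [sigma_list]
  exact ⟨[], by simp, by simp, by simp⟩

lemma sigma_mono (A : Set ℤ) {m n : ℕ} (h : m ≤ n) : SigmaSet A m ⊆ SigmaSet A n := by
  intro x hx
  rw [sigma_list] at hx ⊢
  obtain ⟨l, hl, hmem, rfl⟩ := hx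
  exact ⟨l, hl.trans h, hmem, rfl⟩

lemma sigma_add (A : Set ℤ) {m n : ℕ} {x y : ℤ} (hx : x ∈ SigmaSet A m)
    (hy : y ∈ SigmaSet A n) : x + y ∈ SigmaSet A (m + n) := by
  rw [sigma_list] at hx hy ⊢
  obtain ⟨l₁, hl₁, hm₁, rfl⟩ := hx
  obtain ⟨l₂, hl₂, hm₂, rfl⟩ := hy
  refine ⟨l₁ ++ l₂, by simpa using Nat.add_le_add hl₁ hl₂, ?_, by simp⟩
  intro z hz
  rcases List.mem_append.1 hz with h | h
  · exact hm₁ z h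
  · exact hm₂ z h

lemma sigma_neg (A : Set ℤ) {n : ℕ} {x : ℤ} (hx : x ∈ SigmaSet A n) :
    -x ∈ SigmaSet A n := by
  rw [sigma_list] at hx ⊢
  obtain ⟨l, hl, hmem, rfl⟩ := hx
  refine ⟨l.map (fun z => -z), by simpa using hl, ?_, ?_⟩
  · intro z hz
    rw [List.mem_map] at hz
    obtain ⟨w, hw, rfl⟩ := hz
    simpa using hmem w hw
  · have : ∀ l' : List ℤ, (l'.map (fun z => -z)).sum = -l'.sum := by
      intro l'
      induction l' with
      | nil => simp
      | cons a t ih => simp [ih]; ring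
    rw [this]

lemma sigma_nsmul (A : Set ℤ) {n : ℕ} {x : ℤ} (hx : x ∈ SigmaSet A n) (q : ℕ) :
    (q : ℤ) * x ∈ SigmaSet A (q * n) := by
  induction q with
  | zero => simpa using sigma_zero_mem A 0
  | succ q ih =>
    have := sigma_add A ih hx
    have h : ((q : ℤ) + 1) * x = (q : ℤ) * x + x := by ring
    simpa [h, Nat.succ_mul] using this

lemma sigma_single (A : Set ℤ) {y : ℤ} (h : |y| ∈ A) : y ∈ SigmaSet A 1 := by
  rw [sigma_list]
  exact ⟨[y], by simp, by simpa using h, by simp⟩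

lemma decomp_one (A F : Set ℤ) (M : ℤ) (hM : ∀ f ∈ F, |f| ≤ M) {y : ℤ}
    (hy : |y| ∈ A + F) : ∃ u c : ℤ, u ∈ SigmaSet A 1 ∧ |c| ≤ M ∧ y = u + c := by
  rw [Set.mem_add] at hy
  obtain ⟨a, ha, f, hf, hsum⟩ := hy
  rcases le_or_gt 0 a with h0 | h0
  · set s : ℤ := if 0 ≤ y then 1 else -1 with hs
    have hsy : y = s * |y| := by
      rcases le_or_gt 0 y with h | h
      · simp [hs, h, abs_of_nonneg h]
      · simp [hs, not_le.2 h, abs_of_neg h]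
    have habs : |s| = 1 := by
      rcases le_or_gt 0 y with h | h
      · simp [hs, h]
      · simp [hs, not_le.2 h]
    refine ⟨s * a, s * f, sigma_single A ?_, ?_, ?_⟩
    · have : |s * a| = a := by rw [abs_mul, habs, one_mul, abs_of_nonneg h0]
      rwa [this]
    · rw [abs_mul, habs, one_mul]
      exact hM f hf
    · rw [hsy, ← hsum]
      ring
  · refine ⟨0, y, sigma_zero_mem A 1, ?_, by ring⟩
    have hy0 : |y| = a + f := hsum.symm
    have : |y| ≤ f := by omega
    calc |y| ≤ f := this
      _ ≤ |f| := le_abs_self f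
      _ ≤ M := hM f hf

lemma decomp_list (A F : Set ℤ) (M : ℤ) (hM : ∀ f ∈ F, |f| ≤ M) :
    ∀ l : List ℤ, (∀ y ∈ l, |y| ∈ A + F) →
      ∃ u c : ℤ, u ∈ SigmaSet A l.length ∧ |c| ≤ (l.length : ℤ) * M ∧ l.sum = u + c := by
  intro l
  induction l with
  | nil => exact fun _ => ⟨0, 0, sigma_zero_mem A 0, by simp, by simp⟩
  | cons a t ih =>
    intro h
    obtain ⟨u, c, hu, hc, hsum⟩ := ih (fun y hy => h y (List.mem_cons_of_mem a hy))
    obtain ⟨u₁, c₁, hu₁, hc₁, hsum₁⟩ := decomp_one A F M hM (h a List.mem_cons_self)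
    refine ⟨u₁ + u, c₁ + c, ?_, ?_, ?_⟩
    · have := sigma_add A hu₁ hu
      simpa [List.length_cons, Nat.add_comm] using this
    · have : |c₁ + c| ≤ M + (t.length : ℤ) * M :=
        (abs_add_le _ _).trans (add_le_add hc₁ hc)
      have h2 : ((a :: t).length : ℤ) * M = M + (t.length : ℤ) * M := by
        simp [List.length_cons]; ring
      rw [h2]; exact this
    · rw [List.sum_cons, hsum, hsum₁]; ring

lemma decomp' (A F : Set ℤ) (M : ℤ) (hM : ∀ f ∈ F, |f| ≤ M) (hM0 : 0 ≤ M)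
    {n : ℕ} {x : ℤ} (hx : x ∈ SigmaSet (A + F) n) :
    ∃ c : ℤ, |c| ≤ (n : ℤ) * M ∧ x - c ∈ SigmaSet A n := by
  rw [sigma_list] at hx
  obtain ⟨l, hl, hmem, rfl⟩ := hx
  obtain ⟨u, c, hu, hc, hsum⟩ := decomp_list A F M hM l hmem
  refine ⟨c, ?_, ?_⟩
  · exact hc.trans (mul_le_mul_of_nonneg_right (by exact_mod_cast hl) hM0)
  · have : l.sum - c = u := by omega
    rw [this]
    exact sigma_mono A hl hu

/-- If `A ⊆ ℤ` is sufficiently sparse and `F ⊆ ℤ` is finite then `A + F` is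
sufficiently sparse. -/
theorem stmt17 (A F : Set ℤ) (hA : SuffSparse A) (hF : F.Finite) :
    SuffSparse (A + F) := by
  -- get a bound M on |f| for f ∈ F
  obtain ⟨M', hM'⟩ := (hF.image (fun f => |f|)).bddAbove
  set M : ℤ := max M' 0 with hMdef
  have hM : ∀ f ∈ F, |f| ≤ M := fun f hf =>
    le_trans (hM' (Set.mem_image_of_mem _ hf)) (le_max_left _ _)
  have hM0 : (0 : ℤ) ≤ M := le_max_right _ _
  intro n H hsub
  rw [AddSubgroup.eq_bot_iff_forall]
  intro z hz
  by_contra hz0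
  set B : ℤ := (n : ℤ) * M with hBdef
  have hB : 0 ≤ B := mul_nonneg (by positivity) hM0
  set N : ℕ := (2 * B + 1).toNat with hNdef
  -- key step: for every t, some small multiple of t*z lies in Σ_{2n}(±A)
  have key : ∀ t : ℤ, ∃ r : ℕ, 1 ≤ r ∧ r ≤ N ∧ (r : ℤ) * (t * z) ∈ SigmaSet A (2 * n) := by
    intro t
    have hdec : ∀ j : ℕ, ∃ c, c ∈ Finset.Icc (-B) B ∧ ((j : ℤ) * t * z - c) ∈ SigmaSet A n := by
      intro j
      have hmem : ((j : ℤ) * t) • z ∈ H := AddSubgroup.zsmul_mem H hz _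
      have hx : (j : ℤ) * t * z ∈ SigmaSet (A + F) n := by
        have := hsub hmem
        simpa [zsmul_eq_mul] using this
      obtain ⟨c, hc, hc2⟩ := decomp' A F M hM hM0 hx
      exact ⟨c, by rw [Finset.mem_Icc]; constructor <;> [linarith [neg_abs_le c]; linarith [le_abs_self c]], hc2⟩
    choose c hc1 hc2 using hdec
    have hcard : (Finset.Icc (-B) B).card < (Finset.range (N + 1)).card := by
      rw [Int.card_Icc, Finset.card_range]
      omega
    obtain ⟨j, hj, j', hj', hne, heq⟩ :=
      Finset.exists_ne_map_eq_of_card_lt_of_maps_to hcard (fun j _ => hc1 j)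
    rcases hne.lt_or_gt with hlt | hlt
    case _ =>
      refine ⟨j' - j, by omega, ?_, ?_⟩
      · have := Finset.mem_range.1 hj'
        omega
      · have hdiff : ((j' - j : ℕ) : ℤ) * (t * z) =
            ((j' : ℤ) * t * z - c j') + -((j : ℤ) * t * z - c j) := by
          rw [heq]
          push_cast [Nat.cast_sub hlt.le]
          ring
        rw [hdiff, two_mul]
        exact sigma_add A (hc2 j') (sigma_neg A (hc2 j))
    case _ =>
      refine ⟨j - j', by omega, ?_, ?_⟩
      · have := Finset.mem_range.1 hj
        omega
      · have hdiff : ((j - j' : ℕ) : ℤ) * (t * z) =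
            ((j : ℤ) * t * z - c j) + -((j' : ℤ) * t * z - c j') := by
          rw [heq]
          push_cast [Nat.cast_sub hlt.le]
          ring
        rw [hdiff, two_mul]
        exact sigma_add A (hc2 j) (sigma_neg A (hc2 j'))
  -- now build a nontrivial subgroup inside Σ_{2n·N!}(±A)
  set w : ℤ := (N.factorial : ℤ) * z with hwdef
  have hsub2 : (AddSubgroup.zmultiples w : Set ℤ) ⊆ SigmaSet A (2 * n * N.factorial) := by
    intro x hx
    rw [SetLike.mem_coe, AddSubgroup.mem_zmultiples_iff] at hx
    obtain ⟨t, rfl⟩ := hx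
    obtain ⟨r, hr1, hrN, hmem⟩ := key t
    have hdvd : r ∣ N.factorial := Nat.dvd_factorial hr1 hrN
    obtain ⟨q, hq⟩ := hdvd
    have hq' : (q : ℤ) * ((r : ℤ) * (t * z)) ∈ SigmaSet A (q * (2 * n)) :=
      sigma_nsmul A hmem q
    have hqle : q * (2 * n) ≤ 2 * n * N.factorial := by
      have hqle' : q ≤ N.factorial := Nat.le_of_dvd N.factorial_pos ⟨r, by rw [hq, Nat.mul_comm]⟩
      calc q * (2 * n) ≤ N.factorial * (2 * n) := Nat.mul_le_mul_right _ hqle'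
        _ = 2 * n * N.factorial := Nat.mul_comm _ _
    have hxe : t • w = (q : ℤ) * ((r : ℤ) * (t * z)) := by
      rw [hwdef, zsmul_eq_mul, hq]
      push_cast
      ring
    rw [hxe]
    exact sigma_mono A hqle hq'
  have hbot := hA (2 * n * N.factorial) (AddSubgroup.zmultiples w) hsub2
  have hwmem : w ∈ AddSubgroup.zmultiples w := AddSubgroup.mem_zmultiples w
  rw [hbot, AddSubgroup.mem_bot] at hwmem
  have : (N.factorial : ℤ) ≠ 0 := by
    exact_mod_cast N.factorial_pos.ne'
  exact hz0 (by simpa [hwdef, this, Nat.factorial_ne_zero] using hwmem)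
end
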